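/- arXiv:2203.01832 — 2 statements merged into one kernel-verified Lean document; each statement's English description precedes it below -/
import Mathlib

section
/- With x_n = ∏_{k ≤ n} (p_k^2 − χ(p_k)) and y_n = ∏_{k ≤ n} p_k^2 over the odd primes p_k, the sequence of rationals y_n/x_n converges to the Catalan constant β(2) as n → ∞. -/
/-- The non-principal Dirichlet character mod 4. -/
def chi (n : ℕ) : ℤ :=
  if n % 4 = 1 then 1 else if n % 4 = 3 then -1 else 0

/-- The k-th odd prime (0-indexed). -/
noncomputable def oddPrime (k : ℕ) : ℕ :=
  Nat.nth (fun q => q.Prime ∧ q % 2 = 1) k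

noncomputable def X (n : ℕ) : ℤ :=
  ∏ k ∈ Finset.range (n + 1), ((oddPrime k : ℤ) ^ 2 - chi (oddPrime k))

noncomputable def Y (n : ℕ) : ℤ :=
  ∏ k ∈ Finset.range (n + 1), (oddPrime k : ℤ) ^ 2

lemma chi_mul (m n : ℕ) : chi (m * n) = chi m * chi n := by
  unfold chi
  rw [Nat.mul_mod]
  have hm : m % 4 = 0 ∨ m % 4 = 1 ∨ m % 4 = 2 ∨ m % 4 = 3 := by omega
  have hn : n % 4 = 0 ∨ n % 4 = 1 ∨ n % 4 = 2 ∨ n % 4 = 3 := by omega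
  rcases hm with h | h | h | h <;> rcases hn with h' | h' | h' | h' <;>
    rw [h, h'] <;> norm_num

lemma chi_abs_le (n : ℕ) : |chi n| ≤ 1 := by
  unfold chi
  split_ifs <;> norm_num

/-- The completely multiplicative function n ↦ χ(n)/n². -/
noncomputable def F : ℕ →*₀ ℝ where
  toFun n := (chi n : ℝ) / (n : ℝ) ^ 2
  map_zero' := by simp [chi]
  map_one' := by simp [chi]
  map_mul' m n := by
    rcases eq_or_ne m 0 with rfl | hm
    · simp [chi]
    rcases eq_or_ne n 0 with rfl | hn
    · simp [chi]
    push_cast [chi_mul, mul_pow]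
    rw [div_mul_div_comm]

lemma summable_F : Summable (fun n => ‖F n‖) := by
  have h2 : Summable (fun n : ℕ => 1 / (n : ℝ) ^ 2) := by
    simpa using Real.summable_one_div_nat_pow.mpr (by norm_num : 1 < 2)
  refine h2.of_nonneg_of_le (fun n => norm_nonneg _) fun n => ?_
  simp only [F, MonoidWithZeroHom.coe_mk, ZeroHom.coe_mk, Real.norm_eq_abs, abs_div]
  rcases eq_or_ne n 0 with rfl | hn
  · simp
  have hn' : (0:ℝ) < (n:ℝ) ^ 2 := by positivity
  rw [abs_of_nonneg hn'.le]
  gcongr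
  exact_mod_cast chi_abs_le n

lemma oddSet_infinite : {q : ℕ | q.Prime ∧ q % 2 = 1}.Infinite := by
  have : {q : ℕ | q.Prime ∧ q % 2 = 1} = {q : ℕ | q.Prime} \ {2} := by
    ext q
    simp only [Set.mem_setOf_eq, Set.mem_diff, Set.mem_singleton_iff]
    constructor
    · rintro ⟨hq, h2⟩; exact ⟨hq, by omega⟩
    · rintro ⟨hq, h2⟩
      exact ⟨hq, Nat.odd_iff.mp (hq.odd_of_ne_two h2)⟩
  rw [this]
  exact Nat.infinite_setOf_prime.diff (Set.finite_singleton 2)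

lemma oddPrime_spec (k : ℕ) : (oddPrime k).Prime ∧ oddPrime k % 2 = 1 :=
  Nat.nth_mem_of_infinite oddSet_infinite k

lemma oddPrime_inj : Function.Injective oddPrime :=
  Nat.nth_injective oddSet_infinite

/-- The map from ℕ to `Nat.Primes` given by the odd primes. -/
noncomputable def e (k : ℕ) : Nat.Primes := ⟨oddPrime k, (oddPrime_spec k).1⟩

lemma hasSum_F : HasSum F (∑' n, F n) := (summable_F.of_norm).hasSum

lemma hasProd_main :
    HasProd (fun k : ℕ => (1 - F (oddPrime k))⁻¹) (∑' n, F n) := by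
  have hP : HasProd (fun p : Nat.Primes => (1 - F (p : ℕ))⁻¹) (∑' n, F n) :=
    EulerProduct.eulerProduct_completely_multiplicative_hasProd summable_F
  have he : Function.Injective e := by
    intro a b h
    exact oddPrime_inj (congrArg Subtype.val h)
  have hrange : ∀ p : Nat.Primes, p ∉ Set.range e → (1 - F (p : ℕ))⁻¹ = 1 := by
    rintro ⟨p, hp⟩ hmem
    have hodd : ¬ (p % 2 = 1) := by
      intro h
      have : p ∈ {q : ℕ | q.Prime ∧ q % 2 = 1} := ⟨hp, h⟩
      rw [← Nat.range_nth_of_infinite oddSet_infinite] at this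
      obtain ⟨k, hk⟩ := this
      exact hmem ⟨k, by simp [e, oddPrime, hk]; rfl⟩
    have : p = 2 := by
      by_contra hne
      exact hodd (Nat.odd_iff.mp (hp.odd_of_ne_two hne))
    subst this
    have : F 2 = 0 := by
      simp [F, chi]
    simp [this]
  exact (he.hasProd_iff hrange).mpr hP

lemma tsum_F_eq : (∑' n, F n) = ∑' n : ℕ, (-1 : ℝ) ^ n / (2 * n + 1) ^ 2 := by
  have hinj : Function.Injective (fun m : ℕ => 2 * m + 1) := by
    intro a b h
    have h' : 2 * a + 1 = 2 * b + 1 := h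
    omega
  have hzero : ∀ x : ℕ, x ∉ Set.range (fun m : ℕ => 2 * m + 1) → F x = 0 := by
    intro x hx
    have hx2 : x % 2 = 0 := by
      rcases Nat.even_or_odd x with h | h
      · exact Nat.even_iff.mp h
      · obtain ⟨m, hm⟩ := h
        exact absurd ⟨m, by show 2 * m + 1 = x; omega⟩ hx
    have : chi x = 0 := by
      unfold chi
      have : x % 4 = 0 ∨ x % 4 = 2 := by omega
      rcases this with h | h <;> rw [h] <;> norm_num
    simp [F, this]
  have hsum : HasSum (fun m : ℕ => F (2 * m + 1)) (∑' n, F n) :=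
    (hinj.hasSum_iff hzero).mpr hasSum_F
  have hval : ∀ m : ℕ, F (2 * m + 1) = (-1 : ℝ) ^ m / (2 * (m : ℝ) + 1) ^ 2 := by
    intro m
    have hchi : chi (2 * m + 1) = (-1 : ℤ) ^ m := by
      unfold chi
      rcases Nat.even_or_odd m with h | h
      · have h1 : (2 * m + 1) % 4 = 1 := by
          obtain ⟨j, hj⟩ := h; omega
        rw [h1]
        simp [h.neg_one_pow]
      · have h1 : (2 * m + 1) % 4 = 3 := by
          obtain ⟨j, hj⟩ := h; omega
        rw [h1]
        simp [h.neg_one_pow]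
    simp only [F, MonoidWithZeroHom.coe_mk, ZeroHom.coe_mk, hchi]
    push_cast
    ring
  rw [← hsum.tsum_eq]
  exact tsum_congr hval

theorem ratio_tendsto_catalan :
    Filter.Tendsto (fun n => (Y n : ℝ) / (X n : ℝ)) Filter.atTop
      (nhds (∑' n : ℕ, (-1 : ℝ) ^ n / (2 * n + 1) ^ 2)) := by
  have hprod := hasProd_main
  have htend := hprod.tendsto_prod_nat
  have h1 : Filter.Tendsto (fun n => ∏ k ∈ Finset.range (n + 1),
      (1 - F (oddPrime k))⁻¹) Filter.atTop (nhds (∑' n, F n)) :=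
    htend.comp (Filter.tendsto_add_atTop_nat 1)
  rw [← tsum_F_eq]
  refine h1.congr fun n => ?_
  have hXne : ∀ k, ((oddPrime k : ℝ) ^ 2 - (chi (oddPrime k) : ℝ)) ≠ 0 := by
    intro k
    have hk := (oddPrime_spec k).1.two_le
    have h4 : (4:ℝ) ≤ (oddPrime k : ℝ) ^ 2 := by
      have : (2:ℝ) ≤ (oddPrime k : ℝ) := by exact_mod_cast hk
      nlinarith
    have := chi_abs_le (oddPrime k)
    have habs : |(chi (oddPrime k) : ℝ)| ≤ 1 := by exact_mod_cast this
    have := abs_le.mp habs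
    nlinarith
  have heq : ∀ k, (1 - F (oddPrime k))⁻¹ =
      ((oddPrime k : ℝ) ^ 2) / ((oddPrime k : ℝ) ^ 2 - (chi (oddPrime k) : ℝ)) := by
    intro k
    have hk := (oddPrime_spec k).1.two_le
    have hpos : (0:ℝ) < (oddPrime k : ℝ) ^ 2 := by
      have : (2:ℝ) ≤ (oddPrime k : ℝ) := by exact_mod_cast hk
      positivity
    simp only [F, MonoidWithZeroHom.coe_mk, ZeroHom.coe_mk]
    rw [eq_div_iff (hXne k)]
    field_simp
    rw [div_self (hXne k)]
  calc (∏ k ∈ Finset.range (n + 1), (1 - F (oddPrime k))⁻¹)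
      = ∏ k ∈ Finset.range (n + 1),
        ((oddPrime k : ℝ) ^ 2 / ((oddPrime k : ℝ) ^ 2 - (chi (oddPrime k) : ℝ))) := by
        exact Finset.prod_congr rfl fun k _ => heq k
    _ = (Y n : ℝ) / (X n : ℝ) := by
        rw [Finset.prod_div_distrib]
        simp only [X, Y]
        push_cast
        rfl
end

section
/- Brun's irrationality criterion: let (x_n) and (y_n) be sequences of positive integers, both strictly increasing, such that (i) y_n/x_n converges to a nonzero real number α, (ii) y_n/x_n < y_{n+1}/x_{n+1} for all n, and (iii) (y_{n+1} − y_n)/(x_{n+1} − x_n) > (y_{n+2} − y_{n+1})/(x_{n+2} − x_{n+1}) for all n. Then α is irrational. -/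
theorem brun_irrationality_criterion (x y : ℕ → ℕ) (α : ℝ)
    (hx : StrictMono x) (hy : StrictMono y)
    (hxpos : ∀ n, 0 < x n) (hypos : ∀ n, 0 < y n)
    (hα : α ≠ 0)
    (hlim : Filter.Tendsto (fun n => (y n : ℝ) / (x n : ℝ)) Filter.atTop (nhds α))
    (hinc : ∀ n, (y n : ℝ) / (x n : ℝ) < (y (n + 1) : ℝ) / (x (n + 1) : ℝ))
    (hdec : ∀ n, ((y (n + 1) : ℝ) - y n) / ((x (n + 1) : ℝ) - x n) >
        ((y (n + 2) : ℝ) - y (n + 1)) / ((x (n + 2) : ℝ) - x (n + 1))) :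
    Irrational α := by
  set d : ℕ → ℝ := fun n => ((y (n + 1) : ℝ) - y n) / ((x (n + 1) : ℝ) - x n) with hd
  have hxR : ∀ n, (0:ℝ) < x n := fun n => by exact_mod_cast hxpos n
  have hxlt : ∀ n, (x n : ℝ) < x (n+1) := fun n => by exact_mod_cast hx (Nat.lt_succ_self n)
  have hdanti : StrictAnti d := strictAnti_nat_of_succ_lt (fun n => hdec n)
  have hmono : StrictMono (fun n => (y n : ℝ) / x n) := strictMono_nat_of_lt_succ hinc
  -- each ratio is below α
  have hlt : ∀ n, (y n : ℝ) / x n < α := by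
    intro n
    have h1 : (y (n+1) : ℝ) / x (n+1) ≤ α := by
      apply ge_of_tendsto hlim
      filter_upwards [Filter.eventually_ge_atTop (n+1)] with m hm
      exact hmono.monotone hm
    exact lt_of_lt_of_le (hinc n) h1
  -- telescoping bound
  have key : ∀ n m, n ≤ m → (y m : ℝ) ≤ y n + d n * ((x m : ℝ) - x n) := by
    intro n m hnm
    induction m with
    | zero =>
      have : n = 0 := Nat.le_zero.mp hnm
      subst this; simp
    | succ m ih =>
      rcases Nat.lt_or_ge n (m+1) with h | h
      · have hnm' : n ≤ m := Nat.lt_succ_iff.mp h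
        have hne : ((x (m+1) : ℝ) - x m) ≠ 0 := ne_of_gt (by linarith [hxlt m])
        have step : (y (m+1) : ℝ) = y m + d m * ((x (m+1) : ℝ) - x m) := by
          rw [hd]; field_simp; ring
        have hdm : d m ≤ d n := hdanti.antitone hnm'
        have hxm : (0:ℝ) ≤ (x (m+1) : ℝ) - x m := le_of_lt (by linarith [hxlt m])
        have h2 : d m * ((x (m+1) : ℝ) - x m) ≤ d n * ((x (m+1) : ℝ) - x m) :=
          mul_le_mul_of_nonneg_right hdm hxm
        have h3 := ih hnm'
        rw [step]
        nlinarith [h2, h3]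
      · have : n = m + 1 := le_antisymm hnm h
        subst this; simp
  -- α ≤ d n
  have hdle : ∀ n, α ≤ d n := by
    intro n
    have hxtop : Filter.Tendsto (fun m => (x m : ℝ)) Filter.atTop Filter.atTop :=
      tendsto_natCast_atTop_atTop.comp hx.tendsto_atTop
    have hg : Filter.Tendsto
        (fun m => ((y n : ℝ) - d n * x n) / x m + d n) Filter.atTop (nhds (d n)) := by
      have h0 : Filter.Tendsto (fun m => ((y n : ℝ) - d n * x n) / x m)
          Filter.atTop (nhds 0) := Filter.Tendsto.div_atTop tendsto_const_nhds hxtop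
      simpa using h0.add (tendsto_const_nhds (x := d n))
    refine le_of_tendsto_of_tendsto hlim hg ?_
    filter_upwards [Filter.eventually_ge_atTop n] with m hm
    have hb := key n m hm
    have hx0 := hxR m
    have heq : ((y n : ℝ) - d n * x n) / x m + d n
        = ((y n : ℝ) + d n * ((x m : ℝ) - x n)) / x m := by
      field_simp; ring
    rw [heq]
    exact (div_le_div_iff_of_pos_right hx0).mpr hb
  have hdgt : ∀ n, α < d n := fun n => lt_of_le_of_lt (hdle (n+1)) (hdec n)
  -- now rationality contradiction
  rintro ⟨q, rfl⟩
  have hq0 : (0:ℝ) < (q:ℝ) := lt_of_le_of_lt (by positivity) (hlt 0)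
  have hden : (0:ℝ) < (q.den : ℝ) := by exact_mod_cast q.pos
  have hqeq : (q:ℝ) = (q.num : ℝ) / (q.den : ℝ) := by rw [Rat.cast_def]
  set a : ℕ → ℤ := fun n => q.num * x n - q.den * y n with ha
  have ha1 : ∀ n, 1 ≤ a n := by
    intro n
    have h1 : (y n : ℝ) < (q:ℝ) * x n := by
      have := hlt n
      rw [div_lt_iff₀ (hxR n)] at this
      linarith
    have h2 : (q.den : ℝ) * y n < (q.num : ℝ) * x n := by
      rw [hqeq] at h1
      rw [div_mul_eq_mul_div, lt_div_iff₀ hden] at h1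
      linarith
    have h3 : (q.den : ℤ) * y n < q.num * x n := by exact_mod_cast h2
    simp only [ha]; omega
  have hstep : ∀ n, a (n+1) < a n := by
    intro n
    have hpos : (0:ℝ) < (x (n+1) : ℝ) - x n := by linarith [hxlt n]
    have h1 : (q:ℝ) * ((x (n+1) : ℝ) - x n) < (y (n+1) : ℝ) - y n := by
      have := hdgt n
      rw [hd, lt_div_iff₀ hpos] at this
      linarith
    have h2 : (q.num : ℝ) * ((x (n+1) : ℝ) - x n)
        < (q.den : ℝ) * ((y (n+1) : ℝ) - y n) := by
      rw [hqeq, div_mul_eq_mul_div, div_lt_iff₀ hden] at h1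
      nlinarith
    have h3 : q.num * ((x (n+1) : ℤ) - x n) < (q.den : ℤ) * ((y (n+1) : ℤ) - y n) := by
      exact_mod_cast h2
    simp only [ha]; nlinarith [h3]
  have hbound : ∀ n, a n + n ≤ a 0 := by
    intro n
    induction n with
    | zero => simp
    | succ n ih => have := hstep n; push_cast; omega
  have h1 := hbound (a 0).toNat
  have h2 := ha1 (a 0).toNat
  have h3 := ha1 0
  omega
end
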